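/- Let p ∈ (0,1]. For every T > 0 there exist a constant C_T > 0 and an integer N such that for all n ≥ N, sup_{t∈[0,T]} |a_{n+⌊nt⌋}/a_n − (1+t)^{1−2p}| ≤ C_T/n. -/

import Mathlib

open Real Finset
set_option maxHeartbeats 1000000

/-- `a p n = Γ(2p)·Γ(n)/Γ(n+2p−1)`. -/
noncomputable def a (p : ℝ) (n : ℕ) : ℝ :=
  Real.Gamma (2*p) * Real.Gamma n / Real.Gamma ((n:ℝ) + 2*p - 1)

lemma gamma_prod (x : ℝ) (hx : 0 < x) (m : ℕ) :
    Real.Gamma (x + m) = Real.Gamma x * ∏ k ∈ Finset.range m, (x + k) := by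
  induction m with
  | zero => simp
  | succ m ih =>
    have hxm : x + (m:ℝ) ≠ 0 := by positivity
    have h2 : x + ((m+1 : ℕ) : ℝ) = (x + m) + 1 := by push_cast; ring
    rw [h2, Real.Gamma_add_one hxm, ih, Finset.prod_range_succ]
    ring

lemma log_one_add_sub (x : ℝ) (hx : |x| ≤ 1/2) : |Real.log (1+x) - x| ≤ 2 * x^2 := by
  have h1 : |(-x)| < 1 := by rw [abs_neg]; linarith
  have := Real.abs_log_sub_add_sum_range_le h1 1
  simp only [Finset.sum_range_one, pow_one, Nat.cast_zero, zero_add, div_one,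
    sub_neg_eq_add] at this
  have hax : |x| < 1 := by rw [abs_neg] at h1; exact h1
  have h2 : |(-x)|^2 / (1 - |(-x)|) ≤ 2 * x^2 := by
    rw [abs_neg, sq_abs, div_le_iff₀ (by linarith)]
    nlinarith [abs_nonneg x, sq_nonneg x, sq_abs x]
  have h3 : -x + Real.log (1+x) = Real.log (1+x) - x := by ring
  rw [h3] at this
  exact le_trans this h2

lemma abs_exp_sub_exp (x y : ℝ) : |Real.exp x - Real.exp y| ≤ Real.exp (max x y) * |x - y| := by
  wlog h : y ≤ x generalizing x y
  · rw [abs_sub_comm, abs_sub_comm x y, max_comm]; exact this y x (le_of_not_ge h)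
  have h1 : Real.exp y ≤ Real.exp x := Real.exp_le_exp.2 h
  rw [max_eq_left h, abs_of_nonneg (by linarith), abs_of_nonneg (by linarith)]
  have h2 : (y - x) + 1 ≤ Real.exp (y - x) := Real.add_one_le_exp _
  have h3 : Real.exp y = Real.exp x * Real.exp (y - x) := by rw [← Real.exp_add]; ring_nf
  nlinarith [Real.exp_pos x]

theorem stmt_3 (p : ℝ) (hp : p ∈ Set.Ioc (0:ℝ) 1) (T : ℝ) (hT : 0 < T) :
    ∃ C > (0:ℝ), ∃ N : ℕ, ∀ n : ℕ, N ≤ n →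
      ∀ t ∈ Set.Icc (0:ℝ) T,
        |a p (n + ⌊(n:ℝ) * t⌋₊) / a p n - (1 + t) ^ (1 - 2*p)| ≤ C / n := by
  obtain ⟨hp0, hp1⟩ := hp
  set q : ℝ := 2*p - 1 with hqdef
  clear_value q
  have hq1 : |q| ≤ 1 := by rw [abs_le]; constructor <;> simp [hqdef] <;> linarith
  have hqlt : -1 < q := by simp [hqdef]; linarith
  refine ⟨(1+T) * Real.exp (4*T+1) * (4*T+1), by positivity, 2, ?_⟩
  intro n hn t ht
  obtain ⟨ht0, htT⟩ := ht
  set m : ℕ := ⌊(n:ℝ) * t⌋₊ with hmdef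
  clear_value m
  have hn2 : (2:ℝ) ≤ n := by exact_mod_cast hn
  have hn0 : (0:ℝ) < n := by linarith
  have hmnt : (m:ℝ) ≤ n * t := by rw [hmdef]; exact Nat.floor_le (by positivity)
  have hntm : (n:ℝ) * t < m + 1 := by rw [hmdef]; exact Nat.lt_floor_add_one _
  have hmT : (m:ℝ) ≤ n * T := le_trans hmnt (by nlinarith)
  have hnq0 : (0:ℝ) < (n:ℝ) + q := by linarith
  have hfac : ∀ k ∈ Finset.range m, (0:ℝ) < (n:ℝ) + k := fun k _ => by positivity
  have hfacq : ∀ k ∈ Finset.range m, (0:ℝ) < (n:ℝ) + k + q := fun k _ => by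
    have : (0:ℝ) ≤ (k:ℝ) := Nat.cast_nonneg k
    linarith
  set R : ℝ := ∏ k ∈ Finset.range m, (((n:ℝ)+k)/((n:ℝ)+k+q)) with hRdef
  clear_value R
  have hRpos : 0 < R := by
    rw [hRdef]; exact Finset.prod_pos fun k hk => div_pos (hfac k hk) (hfacq k hk)
  -- Step 1: ratio = R
  have key : a p (n + m) / a p n = R := by
    have e1 : Real.Gamma ((n:ℝ) + m) = Real.Gamma n * ∏ k ∈ Finset.range m, ((n:ℝ) + k) :=
      gamma_prod _ hn0 m
    have e2 : Real.Gamma (((n:ℝ)+q) + m)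
        = Real.Gamma ((n:ℝ)+q) * ∏ k ∈ Finset.range m, ((n:ℝ) + k + q) := by
      rw [gamma_prod _ hnq0 m]
      congr 1
      exact Finset.prod_congr rfl fun k _ => by ring
    have hGn : 0 < Real.Gamma (n:ℝ) := Real.Gamma_pos_of_pos hn0
    have hGnq : 0 < Real.Gamma ((n:ℝ)+q) := Real.Gamma_pos_of_pos hnq0
    have hG2p : 0 < Real.Gamma (2*p) := Real.Gamma_pos_of_pos (by linarith)
    have hPA : (0:ℝ) < ∏ k ∈ Finset.range m, ((n:ℝ) + k) := Finset.prod_pos hfac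
    have hPB : (0:ℝ) < ∏ k ∈ Finset.range m, ((n:ℝ) + k + q) := Finset.prod_pos hfacq
    unfold a
    rw [show ((n + m : ℕ) : ℝ) = (n:ℝ) + m by push_cast; ring]
    rw [show (n:ℝ) + m + 2*p - 1 = ((n:ℝ)+q) + m by rw [hqdef]; ring]
    rw [show (n:ℝ) + 2*p - 1 = (n:ℝ) + q by rw [hqdef]; ring]
    rw [e1, e2, hRdef, Finset.prod_div_distrib]
    field_simp
  -- Step 2: log R
  have hlogR : Real.log R = -∑ k ∈ Finset.range m, Real.log (1 + q/((n:ℝ)+k)) := by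
    rw [← Finset.sum_neg_distrib, hRdef,
      Real.log_prod (fun k hk => (div_pos (hfac k hk) (hfacq k hk)).ne')]
    refine Finset.sum_congr rfl fun k hk => ?_
    have h1 := hfac k hk
    have h2 := hfacq k hk
    rw [Real.log_div h1.ne' h2.ne']
    rw [show 1 + q/((n:ℝ)+k) = ((n:ℝ)+k+q)/((n:ℝ)+k) by field_simp]
    rw [Real.log_div h2.ne' h1.ne']
    ring
  -- telescoping
  have tel : ∑ k ∈ Finset.range m, Real.log (1 + 1/((n:ℝ)+k))
      = Real.log (1 + (m:ℝ)/n) := by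
    have hcg : ∀ k ∈ Finset.range m, Real.log (1 + 1/((n:ℝ)+k))
        = Real.log ((n:ℝ) + (k+1 : ℕ)) - Real.log ((n:ℝ) + k) := by
      intro k hk
      have h1 := hfac k hk
      rw [show 1 + 1/((n:ℝ)+k) = ((n:ℝ)+((k:ℕ)+1:ℕ))/((n:ℝ)+k) by push_cast; field_simp; ring]
      rw [Real.log_div (by push_cast; linarith) h1.ne']
    rw [Finset.sum_congr rfl hcg, Finset.sum_range_sub (fun k => Real.log ((n:ℝ) + k))]
    rw [show (1 : ℝ) + (m:ℝ)/n = ((n:ℝ)+m)/n by field_simp]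
    rw [Real.log_div (by positivity) hn0.ne']
    simp
  -- Step 3: sum bound
  have sumbound : |∑ k ∈ Finset.range m, Real.log (1 + q/((n:ℝ)+k))
      - q * Real.log (1 + (m:ℝ)/n)| ≤ 4*m/n^2 := by
    rw [← tel, Finset.mul_sum, ← Finset.sum_sub_distrib]
    calc |∑ k ∈ Finset.range m, (Real.log (1 + q/((n:ℝ)+k)) - q * Real.log (1 + 1/((n:ℝ)+k)))|
        ≤ ∑ k ∈ Finset.range m, |Real.log (1 + q/((n:ℝ)+k)) - q * Real.log (1 + 1/((n:ℝ)+k))| :=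
          Finset.abs_sum_le_sum_abs _ _
      _ ≤ ∑ _k ∈ Finset.range m, 4/(n:ℝ)^2 := by
          refine Finset.sum_le_sum fun k hk => ?_
          have hk0 : (0:ℝ) ≤ (k:ℝ) := Nat.cast_nonneg k
          have hnk : (2:ℝ) ≤ (n:ℝ) + k := by linarith
          have hnk0 : (0:ℝ) < (n:ℝ) + k := by linarith
          set v : ℝ := 1/((n:ℝ)+k) with hvdef
          clear_value v
          have hv0 : 0 < v := by rw [hvdef]; positivity
          have hv : v ≤ 1/2 := by
            rw [hvdef, div_le_div_iff₀ hnk0 (by norm_num)]; linarith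
          have hu : |q * v| ≤ 1/2 := by
            rw [abs_mul, abs_of_pos hv0]
            calc |q| * v ≤ 1 * v := by gcongr
              _ ≤ 1/2 := by linarith
          have b1 : |Real.log (1 + q*v) - q*v| ≤ 2*(q*v)^2 := log_one_add_sub _ hu
          have b2 : |Real.log (1 + v) - v| ≤ 2*v^2 :=
            log_one_add_sub _ (by rw [abs_of_pos hv0]; exact hv)
          have hqv : q/((n:ℝ)+k) = q * v := by rw [hvdef]; ring
          rw [hqv]
          have b3 : |q * Real.log (1+v) - q*v| ≤ 2*v^2 := by
            have he : q * Real.log (1+v) - q*v = q * (Real.log (1+v) - v) := by ring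
            rw [he, abs_mul]
            calc |q| * |Real.log (1+v) - v| ≤ 1 * (2*v^2) :=
                  mul_le_mul hq1 b2 (abs_nonneg _) zero_le_one
              _ = 2*v^2 := by ring
          have hqsq : q^2 ≤ 1 := by nlinarith [sq_abs q, abs_nonneg q]
          have hq2 : (q*v)^2 ≤ v^2 := by
            have h' : (q*v)^2 = q^2 * v^2 := by ring
            rw [h']; nlinarith [sq_nonneg v]
          have hvn : v ≤ 1/(n:ℝ) := by
            rw [hvdef]; exact one_div_le_one_div_of_le hn0 (by linarith)
          have hv2 : v^2 ≤ 1/(n:ℝ)^2 := by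
            rw [show (1:ℝ)/(n:ℝ)^2 = (1/(n:ℝ))^2 by ring]
            nlinarith [hv0.le]
          calc |Real.log (1 + q*v) - q * Real.log (1+v)|
              = |(Real.log (1 + q*v) - q*v) + -(q * Real.log (1+v) - q*v)| := by congr 1; ring
            _ ≤ |Real.log (1 + q*v) - q*v| + |-(q * Real.log (1+v) - q*v)| := abs_add_le _ _
            _ = |Real.log (1 + q*v) - q*v| + |q * Real.log (1+v) - q*v| := by rw [abs_neg]
            _ ≤ 2*(q*v)^2 + 2*v^2 := add_le_add b1 b3
            _ ≤ 4 * v^2 := by nlinarith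
            _ ≤ 4/(n:ℝ)^2 := by
                have h4 : (4:ℝ)/(n:ℝ)^2 = 4 * (1/(n:ℝ)^2) := by ring
                rw [h4]; linarith
      _ = 4*m/n^2 := by rw [Finset.sum_const, Finset.card_range]; push_cast; ring
  -- Step 4: floor approximation
  have hmn_le_t : (m:ℝ)/n ≤ t := by rw [div_le_iff₀ hn0]; nlinarith
  have hmn0 : (0:ℝ) ≤ (m:ℝ)/n := by positivity
  have h1mn : (0:ℝ) < 1 + (m:ℝ)/n := by linarith
  have h1t : (0:ℝ) < 1 + t := by linarith
  have step4 : |q * Real.log (1 + (m:ℝ)/n) - q * Real.log (1+t)| ≤ 1/n := by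
    have hle : Real.log (1 + (m:ℝ)/n) ≤ Real.log (1+t) :=
      Real.log_le_log h1mn (by linarith)
    have hsub : t - (m:ℝ)/n ≤ 1/n := by
      rw [sub_le_iff_le_add, ← add_div, le_div_iff₀ hn0]
      nlinarith
    have hdiff : Real.log (1+t) - Real.log (1 + (m:ℝ)/n) ≤ 1/n := by
      rw [← Real.log_div h1t.ne' h1mn.ne']
      have hlog := Real.log_le_sub_one_of_pos (show (0:ℝ) < (1+t)/(1+(m:ℝ)/n) by positivity)
      have hds : ((1+t))/(1+(m:ℝ)/n) - 1 = ((1+t) - (1+(m:ℝ)/n))/(1+(m:ℝ)/n) :=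
        div_sub_one h1mn.ne'
      have hdd : ((1+t) - (1+(m:ℝ)/n))/(1+(m:ℝ)/n) ≤ (1+t) - (1+(m:ℝ)/n) :=
        div_le_self (by linarith) (by linarith)
      linarith
    have he : q * Real.log (1 + (m:ℝ)/n) - q * Real.log (1+t)
        = q * -(Real.log (1+t) - Real.log (1 + (m:ℝ)/n)) := by ring
    rw [he, abs_mul, abs_neg, abs_of_nonneg (show (0:ℝ) ≤ Real.log (1+t) - Real.log (1+(m:ℝ)/n) by linarith)]
    calc |q| * (Real.log (1+t) - Real.log (1 + (m:ℝ)/n)) ≤ 1 * (1/n) :=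
        mul_le_mul hq1 hdiff (by linarith) zero_le_one
      _ = 1/n := one_mul _
  -- combine
  have hA : |Real.log R - (-(q * Real.log (1+t)))| ≤ (4*T+1)/n := by
    rw [hlogR]
    have he : -∑ k ∈ Finset.range m, Real.log (1 + q/((n:ℝ)+k)) - -(q * Real.log (1+t))
        = -((∑ k ∈ Finset.range m, Real.log (1 + q/((n:ℝ)+k)) - q * Real.log (1 + (m:ℝ)/n))
            + (q * Real.log (1 + (m:ℝ)/n) - q * Real.log (1+t))) := by ring
    rw [he, abs_neg]
    have habs := abs_add_le
      (∑ k ∈ Finset.range m, Real.log (1 + q/((n:ℝ)+k)) - q * Real.log (1 + (m:ℝ)/n))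
      (q * Real.log (1 + (m:ℝ)/n) - q * Real.log (1+t))
    have hstep : 4*(m:ℝ)/n^2 ≤ 4*T/n := by
      rw [div_le_div_iff₀ (by positivity) hn0]
      nlinarith
    have hcomb : 4*T/n + 1/n = (4*T+1)/n := (add_div _ _ _).symm
    linarith [sumbound, step4]
  -- Step 5: exponentials
  have hrpow : (1+t) ^ (1-2*p) = Real.exp (-(q * Real.log (1+t))) := by
    rw [Real.rpow_def_of_pos h1t]
    congr 1
    rw [hqdef]; ring
  have hlog1t : 0 ≤ Real.log (1+t) := Real.log_nonneg (by linarith)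
  have hlog1tT : Real.log (1+t) ≤ Real.log (1+T) := Real.log_le_log h1t (by linarith)
  have hlogTpos : 0 ≤ Real.log (1+T) := le_trans hlog1t hlog1tT
  have hB : |(-(q * Real.log (1+t)))| ≤ Real.log (1+T) := by
    rw [abs_neg, abs_mul]
    calc |q| * |Real.log (1+t)| ≤ 1 * Real.log (1+T) :=
        mul_le_mul hq1 (by rw [abs_of_nonneg hlog1t]; exact hlog1tT) (abs_nonneg _) zero_le_one
      _ = _ := one_mul _
  have hdn : (4*T+1)/n ≤ 4*T+1 := by
    rw [div_le_iff₀ hn0]; nlinarith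
  have hmax : max (Real.log R) (-(q * Real.log (1+t))) ≤ Real.log (1+T) + (4*T+1) := by
    apply max_le
    · linarith [le_abs_self (Real.log R - (-(q * Real.log (1+t)))),
        le_abs_self (-(q * Real.log (1+t))), hA, hB, hdn]
    · linarith [le_abs_self (-(q * Real.log (1+t))), hB]
  have hexpmax : Real.exp (max (Real.log R) (-(q * Real.log (1+t))))
      ≤ (1+T) * Real.exp (4*T+1) := by
    calc Real.exp (max (Real.log R) (-(q * Real.log (1+t))))
        ≤ Real.exp (Real.log (1+T) + (4*T+1)) := Real.exp_le_exp.2 hmax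
      _ = (1+T) * Real.exp (4*T+1) := by rw [Real.exp_add, Real.exp_log (by linarith)]
  rw [key, hrpow]
  calc |R - Real.exp (-(q * Real.log (1+t)))|
      = |Real.exp (Real.log R) - Real.exp (-(q * Real.log (1+t)))| := by
        rw [Real.exp_log hRpos]
    _ ≤ Real.exp (max (Real.log R) (-(q * Real.log (1+t))))
        * |Real.log R - (-(q * Real.log (1+t)))| := abs_exp_sub_exp _ _
    _ ≤ ((1+T) * Real.exp (4*T+1)) * ((4*T+1)/n) :=
        mul_le_mul hexpmax hA (abs_nonneg _) (by positivity)
    _ = (1+T) * Real.exp (4*T+1) * (4*T+1) / n := by ring
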